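/- Let μ, μ' ∈ E_p and suppose ε(μ)=ε(μ'), χ̄^{(p)}_{Λ̄_1}(μ) = χ̄^{(p)}_{Λ̄_1}(μ') and χ̄^{(p)}_{Λ̄_2}(μ) = χ̄^{(p)}_{Λ̄_2}(μ'). Then μ = μ'. -/

import Mathlib

open Complex Real

/-- The level-`p` 'q'-character of the first fundamental `sl(3)` representation,
evaluated at the weight `μ` with shifted Dynkin labels `(a1, a2) = (⟨μ+ρ̄,α_1⟩,
⟨μ+ρ̄,α_2⟩)`: the sum `Σ_j e^{-2πi⟨e_j, μ+ρ̄⟩/p}` over the weights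
`e_1 = ω_1, e_2 = ω_2−ω_1, e_3 = −ω_2` (so `⟨e_1,μ+ρ̄⟩ = (2a1+a2)/3` etc.). -/
noncomputable def chiFund1 (p : ℕ) (a1 a2 : ℤ) : ℂ :=
  Complex.exp (-(2 * (π : ℂ) * I * (2 * (a1 : ℂ) + (a2 : ℂ))) / (3 * (p : ℂ))) +
    Complex.exp (-(2 * (π : ℂ) * I * ((a2 : ℂ) - (a1 : ℂ))) / (3 * (p : ℂ))) +
    Complex.exp (2 * (π : ℂ) * I * ((a1 : ℂ) + 2 * (a2 : ℂ)) / (3 * (p : ℂ)))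

/-- The level-`p` 'q'-character of the second fundamental representation. -/
noncomputable def chiFund2 (p : ℕ) (a1 a2 : ℤ) : ℂ :=
  Complex.exp (2 * (π : ℂ) * I * (2 * (a1 : ℂ) + (a2 : ℂ)) / (3 * (p : ℂ))) +
    Complex.exp (2 * (π : ℂ) * I * ((a2 : ℂ) - (a1 : ℂ)) / (3 * (p : ℂ))) +
    Complex.exp (-(2 * (π : ℂ) * I * ((a1 : ℂ) + 2 * (a2 : ℂ))) / (3 * (p : ℂ)))

/-- Auxiliary: `e^{2πim/(3p)}` for an integer `m`. -/
noncomputable def Efun (p : ℕ) (m : ℤ) : ℂ :=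
  Complex.exp (2 * (π : ℂ) * I * (m : ℂ) / (3 * (p : ℕ)))

lemma Efun_mul (p : ℕ) (m n : ℤ) : Efun p m * Efun p n = Efun p (m + n) := by
  unfold Efun; rw [← Complex.exp_add]; congr 1; push_cast; ring

lemma Efun_zero (p : ℕ) : Efun p 0 = 1 := by simp [Efun]

lemma Efun_ne_zero (p : ℕ) (m : ℤ) : Efun p m ≠ 0 := Complex.exp_ne_zero _

lemma Efun_inj (p : ℕ) (hp : p ≠ 0) {m n : ℤ} (h : Efun p m = Efun p n) :
    ∃ k : ℤ, m = n + 3 * p * k := by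
  unfold Efun at h
  obtain ⟨k, hk⟩ := Complex.exp_eq_exp_iff_exists_int.mp h
  refine ⟨k, ?_⟩
  have h3p : (3 * (p:ℕ) : ℂ) ≠ 0 := by simp [hp]
  have hpi : (2 * (π:ℂ) * I) ≠ 0 := by
    simp [Real.pi_ne_zero, Complex.I_ne_zero, Complex.ofReal_ne_zero]
  field_simp at hk
  have key : (2 * (π:ℂ) * I) * ((m:ℂ) - ((n:ℂ) + 3 * p * k)) = 0 := by
    linear_combination (2 * (π:ℂ) * I) * hk
  rcases mul_eq_zero.mp key with h' | h'
  · exact absurd h' hpi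
  · have : (m:ℂ) = (n:ℂ) + 3 * p * k := by linear_combination h'
    exact_mod_cast this

lemma chi1_eq (p : ℕ) (a1 a2 : ℤ) :
    chiFund1 p a1 a2 = Efun p (-(2*a1+a2)) + Efun p (a1-a2) + Efun p (a1+2*a2) := by
  unfold chiFund1 Efun
  have t1 : (-(2 * (π : ℂ) * I * (2 * (a1 : ℂ) + (a2 : ℂ))) / (3 * (p : ℂ)))
      = 2 * (π : ℂ) * I * ((-(2*a1+a2) : ℤ) : ℂ) / (3 * (p : ℕ)) := by push_cast; ring
  have t2 : (-(2 * (π : ℂ) * I * ((a2 : ℂ) - (a1 : ℂ))) / (3 * (p : ℂ)))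
      = 2 * (π : ℂ) * I * (((a1-a2) : ℤ) : ℂ) / (3 * (p : ℕ)) := by push_cast; ring
  have t3 : (2 * (π : ℂ) * I * ((a1 : ℂ) + 2 * (a2 : ℂ)) / (3 * (p : ℂ)))
      = 2 * (π : ℂ) * I * (((a1+2*a2) : ℤ) : ℂ) / (3 * (p : ℕ)) := by push_cast; ring
  rw [t1, t2, t3]

lemma chi2_eq (p : ℕ) (a1 a2 : ℤ) :
    chiFund2 p a1 a2 = Efun p (2*a1+a2) + Efun p (a2-a1) + Efun p (-(a1+2*a2)) := by
  unfold chiFund2 Efun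
  have t1 : (2 * (π : ℂ) * I * (2 * (a1 : ℂ) + (a2 : ℂ)) / (3 * (p : ℂ)))
      = 2 * (π : ℂ) * I * (((2*a1+a2) : ℤ) : ℂ) / (3 * (p : ℕ)) := by push_cast; ring
  have t2 : (2 * (π : ℂ) * I * ((a2 : ℂ) - (a1 : ℂ)) / (3 * (p : ℂ)))
      = 2 * (π : ℂ) * I * (((a2-a1) : ℤ) : ℂ) / (3 * (p : ℕ)) := by push_cast; ring
  have t3 : (-(2 * (π : ℂ) * I * ((a1 : ℂ) + 2 * (a2 : ℂ))) / (3 * (p : ℂ)))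
      = 2 * (π : ℂ) * I * (((-(a1+2*a2)) : ℤ) : ℂ) / (3 * (p : ℕ)) := by push_cast; ring
  rw [t1, t2, t3]

lemma pairsum (p : ℕ) (a1 a2 : ℤ) :
    Efun p (-(2*a1+a2)) * Efun p (a1-a2) + Efun p (-(2*a1+a2)) * Efun p (a1+2*a2)
      + Efun p (a1-a2) * Efun p (a1+2*a2) = chiFund2 p a1 a2 := by
  rw [Efun_mul, Efun_mul, Efun_mul, chi2_eq,
      show -(2*a1+a2) + (a1-a2) = -(a1+2*a2) by ring,
      show -(2*a1+a2) + (a1+2*a2) = a2-a1 by ring,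
      show (a1-a2) + (a1+2*a2) = 2*a1+a2 by ring]
  ring

lemma tripprod (p : ℕ) (a1 a2 : ℤ) :
    Efun p (-(2*a1+a2)) * Efun p (a1-a2) * Efun p (a1+2*a2) = 1 := by
  rw [Efun_mul, Efun_mul, show -(2*a1+a2) + (a1-a2) + (a1+2*a2) = 0 by ring, Efun_zero]

lemma sym3_perm {K : Type*} [Field K] (u1 u2 u3 v1 v2 v3 : K)
    (hu1 : u1 ≠ 0) (hu2 : u2 ≠ 0) (hu3 : u3 ≠ 0)
    (h1 : u1 + u2 + u3 = v1 + v2 + v3)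
    (h2 : u1*u2 + u1*u3 + u2*u3 = v1*v2 + v1*v3 + v2*v3)
    (h3 : u1*u2*u3 = v1*v2*v3) :
    (v1 = u1 ∧ v2 = u2 ∧ v3 = u3) ∨ (v1 = u1 ∧ v2 = u3 ∧ v3 = u2) ∨
    (v1 = u2 ∧ v2 = u1 ∧ v3 = u3) ∨ (v1 = u2 ∧ v2 = u3 ∧ v3 = u1) ∨
    (v1 = u3 ∧ v2 = u1 ∧ v3 = u2) ∨ (v1 = u3 ∧ v2 = u2 ∧ v3 = u1) := by
  have hroot : (v1 - u1) * (v1 - u2) * (v1 - u3) = 0 := by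
    linear_combination (-(v1^2)) * h1 + v1 * h2 - h3
  have step : ∀ a b c : K, a ≠ 0 → v1 = a →
      u1 + u2 + u3 = a + b + c → u1*u2*u3 = a*b*c →
      (v2 = b ∧ v3 = c) ∨ (v2 = c ∧ v3 = b) := by
    intro a b c ha hv1 hsum hprod
    subst hv1
    have hsum' : b + c = v2 + v3 := by linear_combination h1 - hsum
    have hprod' : b * c = v2 * v3 := by
      apply mul_left_cancel₀ ha
      linear_combination h3 - hprod
    have hq : (v2 - b) * (v2 - c) = 0 := by
      linear_combination (-v2) * hsum' + hprod'
    rcases mul_eq_zero.mp hq with h' | h'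
    · left
      have hb : v2 = b := by linear_combination h'
      exact ⟨hb, by linear_combination -hsum' - hb⟩
    · right
      have hc : v2 = c := by linear_combination h'
      exact ⟨hc, by linear_combination -hsum' - hc⟩
  rcases mul_eq_zero.mp hroot with h' | h'
  · rcases mul_eq_zero.mp h' with h'' | h''
    · have hv1 : v1 = u1 := by linear_combination h''
      rcases step u1 u2 u3 hu1 hv1 (by ring) (by ring) with ⟨h2', h3'⟩ | ⟨h2', h3'⟩
      · exact Or.inl ⟨hv1, h2', h3'⟩
      · exact Or.inr (Or.inl ⟨hv1, h2', h3'⟩)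
    · have hv1 : v1 = u2 := by linear_combination h''
      rcases step u2 u1 u3 hu2 hv1 (by ring) (by ring) with ⟨h2', h3'⟩ | ⟨h2', h3'⟩
      · exact Or.inr (Or.inr (Or.inl ⟨hv1, h2', h3'⟩))
      · exact Or.inr (Or.inr (Or.inr (Or.inl ⟨hv1, h2', h3'⟩)))
  · have hv1 : v1 = u3 := by linear_combination h'
    rcases step u3 u1 u2 hu3 hv1 (by ring) (by ring) with ⟨h2', h3'⟩ | ⟨h2', h3'⟩
    · exact Or.inr (Or.inr (Or.inr (Or.inr (Or.inl ⟨hv1, h2', h3'⟩))))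
    · exact Or.inr (Or.inr (Or.inr (Or.inr (Or.inr ⟨hv1, h2', h3'⟩))))

lemma kbnd (p k m n : ℤ) (hp : 2 ≤ p) (hm : m = n + 3*p*k)
    (hm1 : -(3*p) ≤ m) (hm2 : m ≤ 3*p) (hn1 : -(3*p) ≤ n) (hn2 : n ≤ 3*p) :
    -2 ≤ k ∧ k ≤ 2 := by
  constructor
  · by_contra hc
    push_neg at hc
    have h3 : k ≤ -3 := by omega
    have : 3*p*k ≤ 3*p*(-3) := mul_le_mul_of_nonneg_left h3 (by omega)
    linarith
  · by_contra hc
    push_neg at hc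
    have h3 : (3:ℤ) ≤ k := by omega
    have : 3*p*3 ≤ 3*p*k := mul_le_mul_of_nonneg_left h3 (by omega)
    linarith

lemma shift_eq (p m n : ℤ) (hp : 2 ≤ p) (hex : ∃ k : ℤ, m = n + 3*p*k)
    (hm1 : -(3*p) ≤ m) (hm2 : m ≤ 3*p) (hn1 : -(3*p) ≤ n) (hn2 : n ≤ 3*p) :
    m = n - 6*p ∨ m = n - 3*p ∨ m = n ∨ m = n + 3*p ∨ m = n + 6*p := by
  obtain ⟨k, hk⟩ := hex
  obtain ⟨h1, h2⟩ := kbnd p k m n hp hk hm1 hm2 hn1 hn2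
  interval_cases k <;> omega

/-- let `μ, μ' ∈ E_p` (with shifted labels `a_i = ⟨μ+ρ̄,α_i⟩ ∈ [1,p]`,
`b_i = ⟨μ'+ρ̄,α_i⟩ ∈ [1,p]`), with `ε(μ) = ε(μ')` (i.e. `μ,μ'` lie in the same half
`E_p^{(±)}`, cut out by `⟨·+ρ̄,θ⟩ ≤ p`), and suppose the two fundamental level-`p`
'q'-characters agree at `μ` and `μ'`. Then `μ = μ'`. -/
theorem statement18 (p : ℕ) (hp : 2 ≤ p) (hcop : Nat.Coprime p 3)
    (a1 a2 b1 b2 : ℤ)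
    (ha1 : 1 ≤ a1) (ha1' : a1 ≤ (p : ℤ)) (ha2 : 1 ≤ a2) (ha2' : a2 ≤ (p : ℤ))
    (hb1 : 1 ≤ b1) (hb1' : b1 ≤ (p : ℤ)) (hb2 : 1 ≤ b2) (hb2' : b2 ≤ (p : ℤ))
    (hsign : a1 + a2 ≤ (p : ℤ) ↔ b1 + b2 ≤ (p : ℤ))
    (hchi1 : chiFund1 p a1 a2 = chiFund1 p b1 b2)
    (hchi2 : chiFund2 p a1 a2 = chiFund2 p b1 b2) :
    a1 = b1 ∧ a2 = b2 := by
  have hp0 : p ≠ 0 := by omega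
  have hP : (2:ℤ) ≤ (p:ℤ) := by exact_mod_cast hp
  have hs1 : Efun p (-(2*a1+a2)) + Efun p (a1-a2) + Efun p (a1+2*a2)
      = Efun p (-(2*b1+b2)) + Efun p (b1-b2) + Efun p (b1+2*b2) := by
    rw [chi1_eq, chi1_eq] at hchi1; exact hchi1
  have hs2 : Efun p (-(2*a1+a2)) * Efun p (a1-a2) + Efun p (-(2*a1+a2)) * Efun p (a1+2*a2)
        + Efun p (a1-a2) * Efun p (a1+2*a2)
      = Efun p (-(2*b1+b2)) * Efun p (b1-b2) + Efun p (-(2*b1+b2)) * Efun p (b1+2*b2)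
        + Efun p (b1-b2) * Efun p (b1+2*b2) := by
    rw [pairsum, pairsum]; exact hchi2
  have hs3 : Efun p (-(2*a1+a2)) * Efun p (a1-a2) * Efun p (a1+2*a2)
      = Efun p (-(2*b1+b2)) * Efun p (b1-b2) * Efun p (b1+2*b2) := by
    rw [tripprod, tripprod]
  rcases sym3_perm _ _ _ _ _ _ (Efun_ne_zero p _) (Efun_ne_zero p _) (Efun_ne_zero p _)
      hs1 hs2 hs3 with h | h | h | h | h | h <;>
    obtain ⟨e1, e2, e3⟩ := h <;>
    [skip; skip; skip; skip; skip; skip] <;>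
    · have d1 := shift_eq (p:ℤ) _ _ hP (Efun_inj p hp0 e1)
        (by omega) (by omega) (by omega) (by omega)
      have d2 := shift_eq (p:ℤ) _ _ hP (Efun_inj p hp0 e2)
        (by omega) (by omega) (by omega) (by omega)
      have d3 := shift_eq (p:ℤ) _ _ hP (Efun_inj p hp0 e3)
        (by omega) (by omega) (by omega) (by omega)
      omega
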